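/- The only solutions to the equation 2^y * (2^x - 1)^z + 1 = (2^(x+1) - 1)^w in integers x ≥ 3, y ≥ 1, z ≥ 0, w ≥ 0 are (y, z, w) = (x+2, 1, 2) and (y, z, w) = (1, 1, 1). -/

import Mathlib

set_option maxHeartbeats 1000000 in
theorem stmt2 (x y z w : ℕ) (hx : 3 ≤ x) (hy : 1 ≤ y)
    (h : 2 ^ y * (2 ^ x - 1) ^ z + 1 = (2 ^ (x + 1) - 1) ^ w) :
    (y = x + 2 ∧ z = 1 ∧ w = 2) ∨ (y = 1 ∧ z = 1 ∧ w = 1) := by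
  have h2x : 8 ≤ 2 ^ x := by
    calc (8:ℕ) = 2 ^ 3 := rfl
    _ ≤ 2 ^ x := Nat.pow_le_pow_right (by norm_num) hx
  obtain ⟨a, ha⟩ : ∃ a, a = 2 ^ x - 1 := ⟨_, rfl⟩
  obtain ⟨b, hb⟩ : ∃ b, b = 2 ^ (x + 1) - 1 := ⟨_, rfl⟩
  rw [← ha, ← hb] at h
  have hxx : 2 ^ (x + 1) = 2 * 2 ^ x := by rw [pow_succ]; ring
  have ha7 : 7 ≤ a := by omega
  have hba : b = 2 * a + 1 := by omega
  have hb15 : 15 ≤ b := by omega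
  have haodd : a % 2 = 1 := by
    have h2 : 2 ∣ 2 ^ x := dvd_pow_self 2 (by omega)
    omega
  -- key identity
  have hkey : 2 ^ y * a ^ z = b ^ w - 1 := by omega
  have hpos : 0 < 2 ^ y * a ^ z := by positivity
  -- w ≥ 1
  have hw1 : 1 ≤ w := by
    rcases Nat.eq_zero_or_pos w with rfl | hw
    · rw [pow_zero] at h; omega
    · exact hw
  -- a ∣ b^w - 1
  have habw : a ∣ b ^ w - 1 := by
    have h1 : (b - 1) ∣ (b ^ w - 1 ^ w) := Nat.sub_dvd_pow_sub_pow b 1 w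
    rw [one_pow] at h1
    exact dvd_trans ⟨2, by omega⟩ h1
  -- z ≥ 1
  have hz1 : 1 ≤ z := by
    by_contra hz
    have hz0 : z = 0 := by omega
    subst hz0
    rw [pow_zero, mul_one] at hkey
    rw [← hkey] at habw
    rcases (Nat.dvd_prime_pow Nat.prime_two).1 habw with ⟨i, hiy, hai⟩
    rcases i with _ | j
    · simp at hai; omega
    · have h2a : 2 ∣ a := hai ▸ dvd_pow_self 2 (Nat.succ_ne_zero j)
      omega
  rcases Nat.even_or_odd w with ⟨v, hv⟩ | hodd
  · -- Case A : w even
    left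
    have hv1 : 1 ≤ v := by omega
    set c := b ^ v with hc
    have hcb : b ≤ c := Nat.le_self_pow (by omega) b
    have hcc : c * c = b ^ w := by rw [hc, hv, ← pow_add]
    obtain ⟨c', hc'⟩ : ∃ c', c = c' + 1 := ⟨c - 1, by omega⟩
    have hfac : c' * (c' + 2) = 2 ^ y * a ^ z := by nlinarith [hkey, hcc, hc']
    -- a ∣ c'
    have hac' : a ∣ c' := by
      have h1 : (b - 1) ∣ (b ^ v - 1 ^ v) := Nat.sub_dvd_pow_sub_pow b 1 v
      rw [one_pow] at h1
      have h2 : a ∣ b ^ v - 1 := dvd_trans ⟨2, by omega⟩ h1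
      have : b ^ v - 1 = c' := by omega
      rwa [this] at h2
    -- coprime (c'+2) a
    have hcop : Nat.Coprime (c' + 2) a := by
      set d := Nat.gcd (c' + 2) a with hd
      have hd1 : d ∣ c' + 2 := Nat.gcd_dvd_left _ _
      have hd2 : d ∣ a := Nat.gcd_dvd_right _ _
      have hd3 : d ∣ c' := hd2.trans hac'
      have hd4 : d ∣ 2 := by
        have := Nat.dvd_sub hd1 hd3
        simpa using this
      rcases (Nat.dvd_prime Nat.prime_two).1 hd4 with h1 | h1
      · exact h1
      · exfalso
        have : 2 ∣ a := h1 ▸ hd2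
        omega
    have hdvd : c' + 2 ∣ 2 ^ y := by
      have h1 : c' + 2 ∣ 2 ^ y * a ^ z := ⟨c', by rw [← hfac]; ring⟩
      exact (Nat.Coprime.dvd_of_dvd_mul_right (hcop.pow_right z) h1)
    obtain ⟨k, hky, hck⟩ := (Nat.dvd_prime_pow Nat.prime_two).1 hdvd
    -- b*b ≡ 1 mod 2^(x+2)
    have h4 : 2 ^ (x + 2) = 4 * (a + 1) := by
      have : (2:ℕ) ^ (x + 2) = 4 * 2 ^ x := by ring
      omega
    have hbb : b * b = 2 ^ (x + 2) * a + 1 := by rw [h4, hba]; ring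
    have hM : 32 ≤ 2 ^ (x + 2) := by omega
    have hv01 : v = 1 := by
      rcases Nat.even_or_odd v with ⟨u, hu⟩ | ⟨u, hu⟩
      · -- v even : contradiction
        exfalso
        have hcu : c = (b * b) ^ u := by
          rw [hc, hu, ← two_mul, pow_mul, sq]
        have hMc : 2 ^ (x + 2) ∣ c - 1 := by
          have h1 : (b * b - 1) ∣ ((b * b) ^ u - 1 ^ u) := Nat.sub_dvd_pow_sub_pow _ 1 u
          rw [one_pow, ← hcu] at h1
          have hmid : 2 ^ (x + 2) ∣ b * b - 1 := ⟨a, by omega⟩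
          exact hmid.trans h1
        have hcbig : 2 ^ (x + 2) < c := by
          have : b * b ≤ c := by
            rw [hcu]
            have hu1 : 1 ≤ u := by omega
            exact Nat.le_self_pow (by omega) _
          have hle : 2 ^ (x + 2) ≤ 2 ^ (x + 2) * a := Nat.le_mul_of_pos_right _ (by omega)
          omega
        have hkbig : x + 2 < k := by
          have : 2 ^ (x + 2) < 2 ^ k := by omega
          exact (Nat.pow_lt_pow_iff_right (by norm_num)).1 this
        have hMk : 2 ^ (x + 2) ∣ 2 ^ k := pow_dvd_pow 2 (by omega)
        have : 2 ^ (x + 2) ∣ 2 := by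
          have h2 : 2 ^ (x + 2) ∣ 2 ^ k - (c - 1) := Nat.dvd_sub hMk hMc
          have : 2 ^ k - (c - 1) = 2 := by omega
          rwa [this] at h2
        have := Nat.le_of_dvd (by norm_num) this
        omega
      · -- v odd
        have hcu : c = (b * b) ^ u * b := by
          rw [hc, hu, pow_add, pow_mul, pow_one, sq]
        have hMc : 2 ^ (x + 2) ∣ c - b := by
          have h1 : (b * b - 1) ∣ ((b * b) ^ u - 1 ^ u) := Nat.sub_dvd_pow_sub_pow _ 1 u
          rw [one_pow] at h1
          have hmid : 2 ^ (x + 2) ∣ b * b - 1 := ⟨a, by omega⟩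
          have h2 : 2 ^ (x + 2) ∣ (b * b) ^ u - 1 := hmid.trans h1
          have h3 : c - b = b * ((b * b) ^ u - 1) := by
            rw [Nat.mul_sub, mul_one, mul_comm b, ← hcu]
          rw [h3]
          exact Dvd.dvd.mul_left h2 b
        have hbp1 : b + 1 = 2 ^ (x + 1) := by omega
        by_contra hvne
        have hu1 : 1 ≤ u := by omega
        have hcbig : 2 ^ (x + 2) < c := by
          have h5 : b * b ≤ (b * b) ^ u := Nat.le_self_pow (by omega) _
          have h6 : b * b ≤ c := by
            calc b * b ≤ (b * b) ^ u := h5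
            _ ≤ (b * b) ^ u * b := Nat.le_mul_of_pos_right _ (by omega)
            _ = c := hcu.symm
          have hle : 2 ^ (x + 2) ≤ 2 ^ (x + 2) * a := Nat.le_mul_of_pos_right _ (by omega)
          omega
        have hkbig : x + 2 < k := by
          have : 2 ^ (x + 2) < 2 ^ k := by omega
          exact (Nat.pow_lt_pow_iff_right (by norm_num)).1 this
        have hMk : 2 ^ (x + 2) ∣ 2 ^ k := pow_dvd_pow 2 (by omega)
        have hfin : 2 ^ (x + 2) ∣ 2 ^ (x + 1) := by
          have h2 : 2 ^ (x + 2) ∣ 2 ^ k - (c - b) := Nat.dvd_sub hMk hMc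
          have h3 : 2 ^ k - (c - b) = 2 ^ (x + 1) := by omega
          rwa [h3] at h2
        have := Nat.le_of_dvd (by positivity) hfin
        omega
    -- v = 1 : finish
    subst hv01
    have hw2 : w = 2 := by omega
    have hcb' : c = b := by rw [hc, pow_one]
    have hc2a : c' = 2 * a := by omega
    have hc2 : c' + 2 = 2 ^ (x + 1) := by omega
    have hfin : a * 2 ^ (x + 2) = 2 ^ y * a ^ z := by
      have : (2:ℕ) ^ (x + 2) = 2 ^ (x + 1) * 2 := by ring
      rw [this, ← hc2, ← hfac, hc2a]; ring
    obtain ⟨t, rfl⟩ : ∃ t, z = t + 1 := ⟨z - 1, by omega⟩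
    have hcancel : 2 ^ (x + 2) = 2 ^ y * a ^ t := by
      have h1 : a * 2 ^ (x + 2) = a * (2 ^ y * a ^ t) := by
        rw [hfin, pow_succ]; ring
      exact Nat.eq_of_mul_eq_mul_left (by omega) h1
    have ht0 : t = 0 := by
      by_contra ht
      have hda : a ∣ 2 ^ (x + 2) := by
        have h1 : a ∣ a ^ t := dvd_pow_self a ht
        exact dvd_trans h1 ⟨2 ^ y, by rw [hcancel]; ring⟩
      rcases (Nat.dvd_prime_pow Nat.prime_two).1 hda with ⟨i, hiy, hai⟩
      rcases i with _ | j
      · simp at hai; omega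
      · have h2a : 2 ∣ a := hai ▸ dvd_pow_self 2 (Nat.succ_ne_zero j)
        omega
    subst ht0
    have hyx2 : y = x + 2 := by
      rw [pow_zero, mul_one] at hcancel
      exact (Nat.pow_right_injective (le_refl 2) hcancel).symm
    exact ⟨hyx2, rfl, hw2⟩
  · -- Case B : w odd
    obtain ⟨m, hm⟩ := hodd
    -- y = 1
    have hb4 : b % 4 = 3 := by
      have hx1 : x + 1 = (x - 1) + 2 := by omega
      have h1 : (2:ℕ) ^ (x + 1) = 2 ^ (x - 1) * 4 := by rw [hx1, pow_add]; norm_num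
      omega
    have hbw4 : b ^ w % 4 = 3 := by
      have h1 : b ^ w = (b * b) ^ m * b := by rw [hm, pow_add, pow_mul, pow_one, sq]
      have h2 : (b * b) % 4 = 1 := by rw [Nat.mul_mod, hb4]
      have h3 : (b * b) ^ m % 4 = 1 := by rw [Nat.pow_mod, h2, one_pow]; norm_num
      rw [h1, Nat.mul_mod, h3, hb4]
    have hy1 : y = 1 := by
      by_contra hyne
      have hy2 : 2 ≤ y := by omega
      have h4d : 4 ∣ 2 ^ y * a ^ z := by
        have : (4:ℕ) = 2 ^ 2 := by norm_num
        exact Dvd.dvd.mul_right (this ▸ pow_dvd_pow 2 hy2) _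
      omega
    subst hy1
    -- now 2 * a^z + 1 = b^w
    rcases Nat.lt_or_ge z 2 with hz2 | hz2
    · -- z = 1
      right
      have hz : z = 1 := by omega
      subst hz
      rw [pow_one, pow_one] at h
      have hbw : b ^ 1 = b ^ w := by rw [pow_one]; omega
      have := Nat.pow_right_injective (by omega : 2 ≤ b) hbw
      exact ⟨rfl, rfl, this.symm⟩
    · -- z ≥ 2 : contradiction via LTE
      exfalso
      obtain ⟨p, hp'⟩ : ∃ p, p = a.minFac := ⟨_, rfl⟩
      have hp : p.Prime := hp' ▸ Nat.minFac_prime (by omega : a ≠ 1)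
      have hpa : p ∣ a := hp' ▸ Nat.minFac_dvd a
      have hpne2 : p ≠ 2 := by
        intro hp2
        have : 2 ∣ a := hp2 ▸ hpa
        omega
      have hp2 : 2 ≤ p := hp.two_le
      have hpodd : Odd p := hp.odd_of_ne_two hpne2
      haveI : Fact p.Prime := ⟨hp⟩
      have hpb1 : p ∣ b - 1 := dvd_trans hpa ⟨2, by omega⟩
      have hpb : ¬ p ∣ b := by
        intro hd
        have h1 : p ∣ b - (b - 1) := Nat.dvd_sub hd hpb1
        have h2 : b - (b - 1) = 1 := by omega
        rw [h2] at h1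
        have := Nat.le_of_dvd one_pos h1
        omega
      have hlte : padicValNat p (b ^ w - 1 ^ w) =
          padicValNat p (b - 1) + padicValNat p w :=
        padicValNat.pow_sub_pow hpodd (by omega) hpb1 hpb (by omega)
      rw [one_pow] at hlte
      have hvp2 : padicValNat p 2 = 0 := padicValNat.eq_zero_of_not_dvd (by
        intro hd
        rcases (Nat.dvd_prime Nat.prime_two).1 hd with h' | h' <;> omega)
      have hα : 1 ≤ padicValNat p a := one_le_padicValNat_of_dvd (by omega) hpa
      have hvlhs : padicValNat p (b ^ w - 1) = z * padicValNat p a := by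
        have h1 : b ^ w - 1 = 2 * a ^ z := by omega
        rw [h1, padicValNat.mul (by norm_num) (by positivity), hvp2,
          padicValNat.pow _ z]
        omega
      have hvb1 : padicValNat p (b - 1) = padicValNat p a := by
        have h1 : b - 1 = 2 * a := by omega
        rw [h1, padicValNat.mul (by norm_num) (by omega), hvp2]
        omega
      rw [hvlhs, hvb1] at hlte
      have hVlb : z - 1 ≤ padicValNat p w := by
        obtain ⟨A, hA⟩ : ∃ A, A = padicValNat p a := ⟨_, rfl⟩
        obtain ⟨V, hV⟩ : ∃ V, V = padicValNat p w := ⟨_, rfl⟩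
        rw [← hA, ← hV] at hlte
        rw [← hA] at hα
        rw [← hV]
        have h1 : (z - 1) * A = z * A - A := by rw [Nat.sub_mul, one_mul]
        have h2 : z - 1 ≤ (z - 1) * A := Nat.le_mul_of_pos_right _ (by omega)
        have h3 : z * A ≥ A := Nat.le_mul_of_pos_left _ (by omega)
        clear hvlhs hvb1 hvp2 hA hV
        omega
      clear hlte hvlhs hvb1 hvp2 hα
      have hpw : p ^ (z - 1) ∣ w :=
        dvd_trans (pow_dvd_pow p hVlb) pow_padicValNat_dvd
      clear hVlb
      have hwlb : 3 ^ (z - 1) ≤ w := by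
        calc 3 ^ (z - 1) ≤ p ^ (z - 1) := Nat.pow_le_pow_left (by omega) _
        _ ≤ w := Nat.le_of_dvd (by omega) hpw
      have hwub : w ≤ z := by
        have h1 : a ^ w < b ^ w := Nat.pow_lt_pow_left (by omega) (by omega)
        have h2 : b ^ w ≤ a ^ (z + 1) := by
          have h3 : a ^ (z + 1) = a * a ^ z := by rw [pow_succ]; ring
          have h4 : 1 ≤ a ^ z := Nat.one_le_pow _ _ (by omega)
          have h5 : b ^ w = 2 * a ^ z + 1 := by omega
          have h6 : 3 * a ^ z ≤ a * a ^ z := Nat.mul_le_mul_right _ (by omega)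
          omega
        have h6 : a ^ w < a ^ (z + 1) := by omega
        have := (Nat.pow_lt_pow_iff_right (by omega : 1 < a)).1 h6
        omega
      have hzlt : z < 3 ^ (z - 1) := by
        have h1 : z - 1 < 2 ^ (z - 1) := Nat.lt_two_pow_self
        have h2 : 2 ^ (z - 1) < 3 ^ (z - 1) :=
          Nat.pow_lt_pow_left (by norm_num) (by omega)
        omega
      omega
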